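/- Let A : ℝⁿ → ℝⁿ be continuous and monotone, B : ℝⁿ → 2^{ℝⁿ} maximal monotone, β > 0, δ ∈ (0,1), θ ∈ (0,1), and let x ∈ ℝⁿ with x ≠ J(x) := (I + βB)^{-1}((I − βA)(x)). Suppose for every j ≥ 0 a point u_j ∈ B(θ^j J(x) + (1 − θ^j)x) is chosen with {u_j} bounded. Then there exists j ≥ 0 such that ⟨A(θ^j J(x) + (1 − θ^j)x) + u_j, x − J(x)⟩ ≥ (δ/β)‖x − J(x)‖². (The Armijo-type linesearch terminates finitely.) -/

import Mathlib

open InnerProductSpace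

def MonotoneMap {n : ℕ} (A : EuclideanSpace ℝ (Fin n) → EuclideanSpace ℝ (Fin n)) : Prop :=
  ∀ x y, 0 ≤ ⟪x - y, A x - A y⟫_ℝ

def MonotoneOp {n : ℕ} (T : EuclideanSpace ℝ (Fin n) → Set (EuclideanSpace ℝ (Fin n))) : Prop :=
  ∀ x y u v, u ∈ T x → v ∈ T y → 0 ≤ ⟪x - y, u - v⟫_ℝ

def MaximalMonotoneOp {n : ℕ}
    (T : EuclideanSpace ℝ (Fin n) → Set (EuclideanSpace ℝ (Fin n))) : Prop :=
  MonotoneOp T ∧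
    ∀ x u, (∀ y v, v ∈ T y → 0 ≤ ⟪x - y, u - v⟫_ℝ) → u ∈ T x

/-- The Armijo-type linesearch terminates after finitely many steps. -/
theorem linesearch_terminates
    (n : ℕ) (A : EuclideanSpace ℝ (Fin n) → EuclideanSpace ℝ (Fin n))
    (B : EuclideanSpace ℝ (Fin n) → Set (EuclideanSpace ℝ (Fin n)))
    (hAc : Continuous A) (hA : MonotoneMap A) (hB : MaximalMonotoneOp B)
    (β δ θ : ℝ) (hβ : 0 < β) (hδ : δ ∈ Set.Ioo (0:ℝ) 1) (hθ : θ ∈ Set.Ioo (0:ℝ) 1)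
    (x Jx : EuclideanSpace ℝ (Fin n))
    (hJ : β⁻¹ • (x - β • A x - Jx) ∈ B Jx)
    (hne : x ≠ Jx)
    (u : ℕ → EuclideanSpace ℝ (Fin n))
    (hu : ∀ j : ℕ, u j ∈ B (θ ^ j • Jx + (1 - θ ^ j) • x))
    (hbd : ∃ M : ℝ, ∀ j : ℕ, ‖u j‖ ≤ M) :
    ∃ j : ℕ,
      ⟪A (θ ^ j • Jx + (1 - θ ^ j) • x) + u j, x - Jx⟫_ℝ ≥ (δ / β) * ‖x - Jx‖ ^ 2 := by
  obtain ⟨M, hM⟩ := hbd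
  by_contra hcon
  push_neg at hcon
  set d := x - Jx with hd
  set p : ℕ → EuclideanSpace ℝ (Fin n) := fun j => θ ^ j • Jx + (1 - θ ^ j) • x with hp
  have hθ0 : Filter.Tendsto (fun j : ℕ => θ ^ j) Filter.atTop (nhds 0) :=
    tendsto_pow_atTop_nhds_zero_of_lt_one hθ.1.le hθ.2
  have hpx : Filter.Tendsto p Filter.atTop (nhds x) := by
    have hc : Continuous (fun t : ℝ => t • Jx + (1 - t) • x) := by fun_prop
    have hc0 := hc.tendsto 0
    simp only [zero_smul, sub_zero, one_smul, zero_add] at hc0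
    exact hc0.comp hθ0
  have hbdd : ∀ j, u j ∈ Metric.closedBall (0 : EuclideanSpace ℝ (Fin n)) M := by
    intro j; simpa [Metric.mem_closedBall, dist_zero_right] using hM j
  obtain ⟨w, -, φ, hφ, hwu⟩ :=
    tendsto_subseq_of_bounded Metric.isBounded_closedBall hbdd
  have hpφ : Filter.Tendsto (fun k => p (φ k)) Filter.atTop (nhds x) :=
    hpx.comp hφ.tendsto_atTop
  have hwB : w ∈ B x := by
    apply hB.2
    intro y v hv
    have htend : Filter.Tendsto (fun k => ⟪p (φ k) - y, u (φ k) - v⟫_ℝ)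
        Filter.atTop (nhds ⟪x - y, w - v⟫_ℝ) :=
      Filter.Tendsto.inner (hpφ.sub tendsto_const_nhds) (hwu.sub tendsto_const_nhds)
    exact ge_of_tendsto htend (Filter.Eventually.of_forall fun k =>
      hB.1 _ y _ v (hu (φ k)) hv)
  have hAxw : Filter.Tendsto (fun k => A (p (φ k)) + u (φ k)) Filter.atTop
      (nhds (A x + w)) := ((hAc.tendsto x).comp hpφ).add hwu
  have hlim : Filter.Tendsto (fun k => ⟪A (p (φ k)) + u (φ k), d⟫_ℝ) Filter.atTop
      (nhds ⟪A x + w, d⟫_ℝ) := hAxw.inner tendsto_const_nhds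
  have hle2 : ⟪A x + w, d⟫_ℝ ≤ (δ / β) * ‖d‖ ^ 2 :=
    le_of_tendsto hlim (Filter.Eventually.of_forall fun k => (hcon (φ k)).le)
  -- lower bound
  have hveq : A x + β⁻¹ • (x - β • A x - Jx) = β⁻¹ • d := by
    rw [hd]
    match_scalars <;> field_simp <;> ring
  have hmono : 0 ≤ ⟪x - Jx, w - β⁻¹ • (x - β • A x - Jx)⟫_ℝ :=
    hB.1 x Jx w _ hwB hJ
  have hsplit : ⟪A x + w, d⟫_ℝ
      = ⟪A x + β⁻¹ • (x - β • A x - Jx), d⟫_ℝ + ⟪w - β⁻¹ • (x - β • A x - Jx), d⟫_ℝ := by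
    rw [← inner_add_left]
    congr 1
    abel
  have hlow : β⁻¹ * ‖d‖ ^ 2 ≤ ⟪A x + w, d⟫_ℝ := by
    rw [hsplit, hveq, real_inner_smul_left, real_inner_self_eq_norm_sq]
    have : 0 ≤ ⟪w - β⁻¹ • (x - β • A x - Jx), d⟫_ℝ := by
      rw [real_inner_comm]; exact hmono
    linarith
  have hdpos : 0 < ‖d‖ ^ 2 := by
    have h0 : d ≠ 0 := sub_ne_zero.mpr hne
    have := norm_pos_iff.mpr h0
    positivity
  have hlt : (δ / β) * ‖d‖ ^ 2 < β⁻¹ * ‖d‖ ^ 2 := by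
    apply mul_lt_mul_of_pos_right _ hdpos
    rw [div_eq_mul_inv]
    have := mul_lt_of_lt_one_left (inv_pos.mpr hβ) hδ.2
    linarith
  linarith
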